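/- Let φ₁, φ₂, … be eigenfunctions of M_ν A_{f,g} with eigenvalues λ₁, λ₂, …, and suppose the identity function g_id(x) = x admits a pointwise-convergent expansion g_id(x) = Σ_i ξ_i φ_i(x) with ξ_i ∈ ℝⁿ, convergence being uniform on compact sets. Then any bounded solution γ_μ of the closed-loop system ẋ = f(x) + g(x)μ(x) satisfies γ_μ(t) = Σ_i ξ_i φ_i(γ_μ(0)) e^{λ_i t}. -/

import Mathlib

/-- If `φ₁, φ₂, …` are eigenfunctions of the closed-loop operator
`M_ν A_{f,g}` (i.e. `∇φ_i·(f + gμ) = λ_i φ_i`) with eigenvalues `λ_i`, and the identity map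
`g_id(x) = x` admits an expansion `x = Σ_i φ_i(x) ξ_i` (pointwise, uniformly convergent on
compact sets), then any bounded closed-loop solution `γ_μ` of `ẋ = f(x) + g(x)μ(x)` satisfies
`γ_μ(t) = Σ_i ξ_i φ_i(γ_μ(0)) e^{λ_i t}`. -/
theorem dynamic_mode_decomposition_reconstruction
    {n m : ℕ}
    (f : EuclideanSpace ℝ (Fin n) → EuclideanSpace ℝ (Fin n))
    (g : EuclideanSpace ℝ (Fin n) → Fin m → EuclideanSpace ℝ (Fin n))
    (μ : EuclideanSpace ℝ (Fin n) → EuclideanSpace ℝ (Fin m))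
    (hf : LocallyLipschitz f) (hg : LocallyLipschitz g) (hμ : LocallyLipschitz μ)
    -- eigenfunctions `φ i` with eigenvalues `lam i`
    (φ : ℕ → EuclideanSpace ℝ (Fin n) → ℝ) (hφ : ∀ i, ContDiff ℝ 1 (φ i))
    (lam : ℕ → ℝ)
    (heig : ∀ (i : ℕ) (x), fderiv ℝ (φ i) x
      (f x + ∑ j, (WithLp.equiv 2 (Fin m → ℝ)) (μ x) j • g x j) = lam i * φ i x)
    -- modes `ξ i ∈ ℝⁿ` expanding the identity function, pointwise...
    (ξ : ℕ → EuclideanSpace ℝ (Fin n))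
    (hexp : ∀ x : EuclideanSpace ℝ (Fin n), HasSum (fun i : ℕ => φ i x • ξ i) x)
    -- ...with convergence uniform on compact sets
    (hunif : ∀ C : Set (EuclideanSpace ℝ (Fin n)), IsCompact C →
      TendstoUniformlyOn (fun (N : ℕ) (x : EuclideanSpace ℝ (Fin n)) =>
        ∑ i ∈ Finset.range N, φ i x • ξ i) (fun x => x) Filter.atTop C)
    -- `γ` is a bounded C¹ solution of the closed-loop system on `[0,∞)`
    (γ : ℝ → EuclideanSpace ℝ (Fin n))
    (hγ : ∀ t ∈ Set.Ici (0 : ℝ), HasDerivAt γ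
      (f (γ t) + ∑ j, (WithLp.equiv 2 (Fin m → ℝ)) (μ (γ t)) j • g (γ t) j) t)
    (hγ_bdd : ∃ B : ℝ, ∀ t ∈ Set.Ici (0 : ℝ), ‖γ t‖ ≤ B) :
    ∀ t ∈ Set.Ici (0 : ℝ),
      HasSum (fun i : ℕ => (Real.exp (lam i * t) * φ i (γ 0)) • ξ i) (γ t) := by
  intro t ht
  have hkey : ∀ i, φ i (γ t) = Real.exp (lam i * t) * φ i (γ 0) := by
    intro i
    have hψ : ∀ s ∈ Set.Ici (0:ℝ), HasDerivAt (fun s => φ i (γ s)) (lam i * φ i (γ s)) s := by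
      intro s hs
      have hdφ := ((hφ i).differentiable one_ne_zero (γ s)).hasFDerivAt
      have := hdφ.comp_hasDerivAt s (hγ s hs)
      rwa [heig i (γ s)] at this
    have hh : ∀ s ∈ Set.Ici (0:ℝ),
        HasDerivAt (fun s => Real.exp (-(lam i) * s) * φ i (γ s)) 0 s := by
      intro s hs
      have he : HasDerivAt (fun s : ℝ => Real.exp (-(lam i) * s))
          (Real.exp (-(lam i) * s) * (-(lam i))) s := by
        simpa using (((hasDerivAt_id s).const_mul (-(lam i))).exp)
      have : HasDerivAt (fun s => Real.exp (-(lam i) * s) * φ i (γ s)) _ s := he.mul (hψ s hs)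
      convert this using 1
      ring
    have hconst : Real.exp (-(lam i) * t) * φ i (γ t)
        = Real.exp (-(lam i) * 0) * φ i (γ 0) := by
      rcases eq_or_lt_of_le (Set.mem_Ici.mp ht) with h0 | h0
      · rw [← h0]
      · have := constant_of_has_deriv_right_zero
          (f := fun s => Real.exp (-(lam i) * s) * φ i (γ s)) (a := 0) (b := t)
          (fun s hs => ((hh s hs.1).continuousAt).continuousWithinAt)
          (fun s hs => ((hh s hs.1).hasDerivWithinAt))
        exact this t (Set.right_mem_Icc.2 ht)
    have h2 : Real.exp (lam i * t) * (Real.exp (-(lam i) * t) * φ i (γ t))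
        = Real.exp (lam i * t) * (Real.exp (-(lam i) * 0) * φ i (γ 0)) := by
      rw [hconst]
    rw [← mul_assoc, ← Real.exp_add] at h2
    simp only [mul_zero, Real.exp_zero, one_mul] at h2
    have : lam i * t + -(lam i) * t = 0 := by ring
    rw [this, Real.exp_zero, one_mul] at h2
    exact h2
  have hfun : (fun i : ℕ => (Real.exp (lam i * t) * φ i (γ 0)) • ξ i)
      = fun i : ℕ => φ i (γ t) • ξ i := by
    funext i; rw [hkey i]
  rw [hfun]
  exact hexp (γ t)
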